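/- For the q-derivative D_q acting on the variable a, and any nonnegative integer n, D_q^n { (as;q)_∞ / (aω;q)_∞ } = (ω/(1-q))^n · ((s/ω;q)_n / (as;q)_n) · (as;q)_∞/(aω;q)_∞, valid where all products converge and are nonzero. -/

import Mathlib

noncomputable def qPoch (x q : ℂ) (n : ℕ) : ℂ := ∏ j ∈ Finset.range n, (1 - x * q ^ j)

noncomputable def qPochInf (x q : ℂ) : ℂ := ∏' j : ℕ, (1 - x * q ^ j)

noncomputable def qBinom (q : ℂ) (n k : ℕ) : ℂ := qPoch q q n / (qPoch q q k * qPoch q q (n - k))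

noncomputable def Dq (q : ℂ) (f : ℂ → ℂ) : ℂ → ℂ := fun a => (f a - f (q * a)) / ((1 - q) * a)

noncomputable def Dqinv (q : ℂ) (f : ℂ → ℂ) : ℂ → ℂ := fun a => (f (q⁻¹ * a) - f a) / ((q⁻¹ - 1) * a)

noncomputable def mPoch {m : ℕ} (a : Fin m → ℂ) (q : ℂ) (k : ℕ) : ℂ := ∏ i, qPoch (a i) q k

noncomputable def phi {r : ℕ} (a : Fin (r + 1) → ℂ) (b : Fin r → ℂ) (q x y : ℂ) (n : ℕ) : ℂ :=
  ∑ k ∈ Finset.range (n + 1), qBinom q n k * (mPoch a q k / mPoch b q k) * x ^ k * y ^ (n - k)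

noncomputable def psi {r : ℕ} (a : Fin (r + 1) → ℂ) (b : Fin r → ℂ) (q x y : ℂ) (n : ℕ) : ℂ :=
  ∑ k ∈ Finset.range (n + 1), qBinom q n k * (mPoch a q k / mPoch b q k) *
    q ^ ((((k + 1).choose 2 : ℕ) : ℤ) - (n : ℤ) * (k : ℤ)) * x ^ k * y ^ (n - k)



open Complex Filter Topology

lemma multipliable_one_sub (x q : ℂ) (hq : ‖q‖ < 1) :
    Multipliable (fun j : ℕ => 1 - x * q ^ j) := by
  by_cases h : ∃ j : ℕ, 1 - x * q ^ j = 0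
  · obtain ⟨j, hj⟩ := h
    refine ⟨0, ?_⟩
    have hev : ∀ᶠ s : Finset ℕ in atTop, ∏ i ∈ s, (1 - x * q ^ i) = 0 := by
      filter_upwards [Filter.eventually_ge_atTop ({j} : Finset ℕ)] with s hs
      exact Finset.prod_eq_zero (hs (Finset.mem_singleton_self j)) hj
    exact Tendsto.congr' (hev.mono fun s hs => hs.symm) tendsto_const_nhds
  · push_neg at h
    refine Complex.multipliable_of_summable_log ?_
    have htend : Tendsto (fun n : ℕ => ‖x‖ * ‖q‖ ^ n) atTop (𝓝 0) := by
      simpa using (tendsto_pow_atTop_nhds_zero_of_lt_one (norm_nonneg q) hq).const_mul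
        (‖x‖)
    have hgeo : Summable (fun n : ℕ => (3/2 : ℝ) * (‖x‖ * ‖q‖ ^ n)) :=
      ((summable_geometric_of_lt_one (norm_nonneg q) hq).mul_left _).mul_left _
    refine Summable.of_norm_bounded_eventually hgeo ?_
    rw [Nat.cofinite_eq_atTop]
    filter_upwards [htend.eventually (eventually_le_nhds (by norm_num : (0:ℝ) < 1/2))] with n hn
    have h1 : ‖(-(x * q ^ n) : ℂ)‖ ≤ 1/2 := by
      simpa [norm_mul, norm_pow] using hn
    have := Complex.norm_log_one_add_half_le_self h1
    rw [show (1 : ℂ) + -(x * q ^ n) = 1 - x * q ^ n by ring] at this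
    calc ‖Complex.log (1 - x * q ^ n)‖ ≤ 3/2 * ‖(-(x * q ^ n) : ℂ)‖ := this
      _ = 3/2 * (‖x‖ * ‖q‖ ^ n) := by
        simp [norm_mul, norm_pow]

set_option maxHeartbeats 1000000 in
lemma qPochInf_shift (x q : ℂ) (hq : ‖q‖ < 1) :
    qPochInf x q = (1 - x) * qPochInf (q * x) q := by
  have h2 : ∀ j : ℕ, 1 - x * q ^ (j + 1) = 1 - q * x * q ^ j := fun j => by ring
  have hm : Multipliable (fun n : ℕ => 1 - x * q ^ (n + 1)) := by
    simp only [h2]; exact multipliable_one_sub (q * x) q hq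
  have h := tprod_eq_zero_mul' (f := fun n : ℕ => 1 - x * q ^ n) hm
  simp only [pow_zero, mul_one, h2] at h
  unfold qPochInf
  exact h



lemma stmt6_key (q s ω : ℂ) (hq0 : q ≠ 0) (hq1 : ‖q‖ < 1) (hω : ω ≠ 0) :
    ∀ n : ℕ, ∀ a : ℂ, a ≠ 0 → ‖a * ω‖ < 1 → qPoch (a * s) q n ≠ 0 →
    (Dq q)^[n] (fun a => qPochInf (a * s) q / qPochInf (a * ω) q) a
      = (ω / (1 - q)) ^ n * (qPoch (s / ω) q n / qPoch (a * s) q n)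
          * (qPochInf (a * s) q / qPochInf (a * ω) q) := by
  have hq1' : (1 : ℂ) - q ≠ 0 := by
    intro h
    rw [show q = 1 by linear_combination -h] at hq1
    simp at hq1
  intro n
  induction n with
  | zero => intro a ha haω hs; simp [qPoch]
  | succ n ih =>
    intro a ha haω hs
    have hfac : ∀ j ∈ Finset.range (n + 1), (1 : ℂ) - a * s * q ^ j ≠ 0 :=
      Finset.prod_ne_zero_iff.mp hs
    have hP : qPoch (a * s) q n ≠ 0 := by
      rw [qPoch, Finset.prod_range_succ] at hs
      exact left_ne_zero_of_mul hs
    have h1 : (1 : ℂ) - a * s * q ^ n ≠ 0 := hfac n (Finset.self_mem_range_succ n)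
    have h0 : (1 : ℂ) - a * s ≠ 0 := by
      have := hfac 0 (Finset.mem_range.mpr n.succ_pos); simpa using this
    have h1ω : (1 : ℂ) - a * ω ≠ 0 := by
      intro h
      rw [show a * ω = 1 by linear_combination -h] at haω
      simp at haω
    have hQ : qPoch (q * a * s) q n ≠ 0 := by
      rw [qPoch]
      refine Finset.prod_ne_zero_iff.mpr fun j hj => ?_
      have hj' := hfac (j + 1) (by rw [Finset.mem_range] at hj ⊢; omega)
      intro hcon; exact hj' (by linear_combination hcon)
    have hqa : q * a ≠ 0 := mul_ne_zero hq0 ha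
    have hqaω : ‖q * a * ω‖ < 1 := by
      calc ‖q * a * ω‖ = ‖q‖ * ‖a * ω‖ := by
            rw [mul_assoc, norm_mul]
        _ ≤ ‖a * ω‖ := mul_le_of_le_one_left (norm_nonneg _) hq1.le
        _ < 1 := haω
    have hrel : (1 - a * s) * qPoch (q * a * s) q n
        = qPoch (a * s) q n * (1 - a * s * q ^ n) := by
      have key1 : (∏ j ∈ Finset.range (n + 1), ((1 : ℂ) - a * s * q ^ j))
          = (∏ j ∈ Finset.range n, ((1 : ℂ) - a * s * q ^ (j + 1))) * (1 - a * s * q ^ 0) :=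
        Finset.prod_range_succ' _ _
      have key2 : (∏ j ∈ Finset.range (n + 1), ((1 : ℂ) - a * s * q ^ j))
          = (∏ j ∈ Finset.range n, ((1 : ℂ) - a * s * q ^ j)) * (1 - a * s * q ^ n) :=
        Finset.prod_range_succ _ _
      have key3 : qPoch (q * a * s) q n = ∏ j ∈ Finset.range n, ((1 : ℂ) - a * s * q ^ (j + 1)) :=
        Finset.prod_congr rfl fun j _ => by ring
      rw [key3]
      simp only [qPoch]
      linear_combination key2 - key1
    have e1 : qPoch (a * s) q (n + 1) = qPoch (a * s) q n * (1 - a * s * q ^ n) :=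
      Finset.prod_range_succ _ _
    have e2 : qPoch (s / ω) q (n + 1) = qPoch (s / ω) q n * (1 - s / ω * q ^ n) :=
      Finset.prod_range_succ _ _
    have e4 : qPochInf (a * s) q = (1 - a * s) * qPochInf (q * a * s) q := by
      rw [show q * a * s = q * (a * s) from mul_assoc q a s]
      exact qPochInf_shift (a * s) q hq1
    have e5 : qPochInf (a * ω) q = (1 - a * ω) * qPochInf (q * a * ω) q := by
      rw [show q * a * ω = q * (a * ω) from mul_assoc q a ω]
      exact qPochInf_shift (a * ω) q hq1
    have hSQ : qPoch (s / ω) q n / qPoch (q * a * s) q n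
        = (1 - a * s) * qPoch (s / ω) q n / (qPoch (a * s) q n * (1 - a * s * q ^ n)) := by
      rw [div_eq_div_iff hQ (mul_ne_zero hP h1)]
      linear_combination (-(qPoch (s / ω) q n)) * hrel
    rw [Function.iterate_succ_apply']
    simp only [Dq]
    rw [ih a ha haω hP, ih (q * a) hqa hqaω hQ, hSQ, e1, e2, e4, e5]
    set A := qPochInf (q * a * s) q with hA
    set B := qPochInf (q * a * ω) q with hBdef
    set P := qPoch (a * s) q n with hPdef
    set S := qPoch (s / ω) q n with hSdef
    clear_value A B P S
    rcases eq_or_ne B 0 with hB | hB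
    · simp only [hB, mul_zero, zero_mul, div_zero, zero_div, sub_self]
    · have hqn : ((1:ℂ) - q)^n ≠ 0 := pow_ne_zero _ hq1'
      have hden1 : ((1:ℂ)-q)^n * P * ((1-a*ω)*B) ≠ 0 :=
        mul_ne_zero (mul_ne_zero hqn hP) (mul_ne_zero h1ω hB)
      have hden2 : ((1:ℂ)-q)^n * (P*(1-a*s*q^n)) * B ≠ 0 :=
        mul_ne_zero (mul_ne_zero hqn (mul_ne_zero hP h1)) hB
      have hdenR : ((1:ℂ)-q)^(n+1) * (ω*(P*(1-a*s*q^n))) * ((1-a*ω)*B) ≠ 0 :=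
        mul_ne_zero (mul_ne_zero (pow_ne_zero _ hq1') (mul_ne_zero hω (mul_ne_zero hP h1)))
          (mul_ne_zero h1ω hB)
      have L1 : (ω/(1-q))^n * (S/P) * ((1-a*s)*A/((1-a*ω)*B))
          = (ω^n * S * ((1-a*s)*A)) / (((1:ℂ)-q)^n * P * ((1-a*ω)*B)) := by
        rw [div_pow]; field_simp
      have L2 : (ω/(1-q))^n * ((1-a*s)*S/(P*(1-a*s*q^n))) * (A/B)
          = (ω^n * ((1-a*s)*S) * A) / (((1:ℂ)-q)^n * (P*(1-a*s*q^n)) * B) := by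
        rw [div_pow]; field_simp
      have R1 : (ω/(1-q))^(n+1) * (S*(1-s/ω*q^n)/(P*(1-a*s*q^n))) * ((1-a*s)*A/((1-a*ω)*B))
          = (ω^(n+1) * (S*(ω - s*q^n)) * ((1-a*s)*A))
            / (((1:ℂ)-q)^(n+1) * (ω*(P*(1-a*s*q^n))) * ((1-a*ω)*B)) := by
        rw [show 1 - s/ω*q^n = (ω - s*q^n)/ω from by field_simp, div_pow,
          show S * ((ω - s*q^n)/ω) = (S*(ω - s*q^n))/ω from mul_div_assoc' S _ ω,
          div_div, div_mul_div_comm, div_mul_div_comm]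
      rw [L1, L2, R1, div_sub_div _ _ hden1 hden2, div_div, div_eq_div_iff
        (mul_ne_zero (mul_ne_zero hden1 hden2) (mul_ne_zero hq1' ha)) hdenR]
      ring


/-- `D_q^n {(as;q)_∞/(aω;q)_∞}`. -/
theorem stmt6 (q a s ω : ℂ) (hq0 : q ≠ 0) (hq1 : ‖q‖ < 1) (ha : a ≠ 0)
    (hω : ω ≠ 0) (haω : ‖a * ω‖ < 1) (n : ℕ) (hs : qPoch (a * s) q n ≠ 0) :
    (Dq q)^[n] (fun a => qPochInf (a * s) q / qPochInf (a * ω) q) a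
      = (ω / (1 - q)) ^ n * (qPoch (s / ω) q n / qPoch (a * s) q n)
          * (qPochInf (a * s) q / qPochInf (a * ω) q) := by
  exact stmt6_key q s ω hq0 hq1 hω n a ha haω hs
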